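/- Let D be a finite type and let ρ be a separable density matrix on D × D: there exist a finite index type I, non-negative reals p : I → ℝ with ∑_i p i = 1, and unit vectors α, β : I → (D → ℂ) such that ρ = ∑_i p i · (α_i α_i†) ⊗ (β_i β_i†). Then there exist a finite type R and a density matrix τ on (D × R) × (D × R) such that: (1) τ is an extension of ρ, i.e., ∑_{r, s : R} τ ((a,r),(b,s)) ((c,r),(d,s)) = ρ (a,b) (c,d) for all a, b, c, d : D; (2) τ is unitarily symmetric, i.e., there exist unitary matrices U, V on D × R such that (U ⊗ V) · (S τ S) · (U ⊗ V)† = τ, where S τ S denotes the swap conjugation (S τ S) (x,y) (x',y') = τ (y,x) (y',x') for x, y, x', y' : D × R; and (3) τ has zero correlated coherence with respect to local eigenbases, i.e., there exist unitary matrices W₁, W₂ on D × R with W₁† τ₁ W₁ and W₂† τ₂ W₂ diagonal (τ₁, τ₂ the reduced matrices of τ) and C((W₁ ⊗ W₂)† τ (W₁ ⊗ W₂)) = 0. -/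

import Mathlib

open Matrix
open scoped Kronecker ComplexOrder

section helpers
variable {n m : Type} [Fintype n] [Fintype m]

set_option linter.unusedSectionVars false

lemma posSemidef_vecMulVec_star (w : n → ℂ) : (vecMulVec w (star w)).PosSemidef := by
  have : vecMulVec w (star w) = (Matrix.replicateRow Unit (star w))ᴴ * Matrix.replicateRow Unit (star w) := by
    ext i j
    simp [vecMulVec_apply, Matrix.mul_apply, Matrix.replicateRow_apply, Matrix.conjTranspose_apply]
  rw [this]
  exact Matrix.posSemidef_conjTranspose_mul_self _

lemma smul_vecMulVec_star (t : ℝ) (ht : 0 ≤ t) (w : n → ℂ) :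
    (t : ℂ) • vecMulVec w (star w) =
      vecMulVec ((Real.sqrt t : ℂ) • w) (star ((Real.sqrt t : ℂ) • w)) := by
  ext i j
  simp only [Matrix.smul_apply, vecMulVec_apply, Pi.star_apply, Pi.smul_apply, smul_eq_mul,
    star_mul', Complex.star_def, Complex.conj_ofReal]
  have h2 : ((Real.sqrt t : ℂ)) * (Real.sqrt t : ℂ) = (t : ℂ) := by
    rw [← Complex.ofReal_mul, Real.mul_self_sqrt ht]
  rw [← h2]; ring

lemma conj_vecMulVec (M : Matrix n n ℂ) (w : n → ℂ) :
    M * vecMulVec w (star w) * Mᴴ = vecMulVec (M *ᵥ w) (star (M *ᵥ w)) := by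
  ext i j
  simp only [Matrix.mul_apply, vecMulVec_apply, Pi.star_apply, Matrix.mulVec, dotProduct,
    Matrix.conjTranspose_apply, star_sum, star_mul', Finset.sum_mul, Finset.mul_sum]
  refine Finset.sum_congr rfl fun k _ => Finset.sum_congr rfl fun l _ => by ring

lemma kron_conjTranspose (A : Matrix n n ℂ) (B : Matrix m m ℂ) :
    (A ⊗ₖ B)ᴴ = Aᴴ ⊗ₖ Bᴴ := by
  ext ⟨i, j⟩ ⟨k, l⟩
  simp [Matrix.conjTranspose_apply, Matrix.kroneckerMap_apply, mul_comm]

lemma kron_mulVec (M : Matrix n n ℂ) (N : Matrix m m ℂ) (f : n → ℂ) (g : m → ℂ) :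
    (M ⊗ₖ N) *ᵥ (fun u : n × m => f u.1 * g u.2) =
      fun u => (M *ᵥ f) u.1 * (N *ᵥ g) u.2 := by
  funext ⟨u1, u2⟩
  simp only [Matrix.mulVec, dotProduct, Matrix.kroneckerMap_apply,
    Fintype.sum_prod_type, Finset.sum_mul, Finset.mul_sum]
  conv_rhs => rw [Finset.sum_comm]
  refine Finset.sum_congr rfl fun k _ => Finset.sum_congr rfl fun l _ => by ring

lemma posSemidef_sum' {I : Type} [Fintype I] (f : I → Matrix n n ℂ)
    (h : ∀ i, (f i).PosSemidef) : (∑ i, f i).PosSemidef := by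
  classical
  exact Finset.sum_induction f _ (fun a b ha hb => ha.add hb) Matrix.PosSemidef.zero
    (fun i _ => h i)

lemma blockDiagonal_mem_unitaryGroup {I : Type} [Fintype I] [DecidableEq I] [DecidableEq n]
    (M : I → Matrix n n ℂ) (h : ∀ i, M i ∈ Matrix.unitaryGroup n ℂ) :
    Matrix.blockDiagonal M ∈ Matrix.unitaryGroup (n × I) ℂ := by
  rw [Matrix.mem_unitaryGroup_iff']
  have h1 : star (Matrix.blockDiagonal M) = Matrix.blockDiagonal fun i => star (M i) := by
    simp [Matrix.star_eq_conjTranspose, Matrix.blockDiagonal_conjTranspose]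
  rw [h1, ← Matrix.blockDiagonal_mul, ← Matrix.blockDiagonal_one]
  refine congrArg Matrix.blockDiagonal ?_
  funext i
  exact (Matrix.mem_unitaryGroup_iff').mp (h i)

/-- indicator vector -/
def ind {γ : Type} [DecidableEq γ] (z : γ) : γ → ℂ := fun u => if u = z then 1 else 0

lemma ind_mul_ind {γ δ : Type} [DecidableEq γ] [DecidableEq δ] (z₁ : γ) (z₂ : δ) :
    (fun u : γ × δ => ind z₁ u.1 * ind z₂ u.2) = ind (z₁, z₂) := by
  funext u
  by_cases h1 : u.1 = z₁ <;> by_cases h2 : u.2 = z₂ <;>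
    simp [ind, h1, h2, Prod.ext_iff]

lemma blockDiagonal_mulVec_single {I : Type} [Fintype I] [DecidableEq I]
    (M : I → Matrix n n ℂ) (i : I) (v : n → ℂ) :
    (Matrix.blockDiagonal M) *ᵥ (fun u : n × I => v u.1 * (if u.2 = i then 1 else 0)) =
      fun u => (M i *ᵥ v) u.1 * (if u.2 = i then 1 else 0) := by
  funext ⟨x, r⟩
  simp only [Matrix.mulVec, dotProduct, Fintype.sum_prod_type,
    Matrix.blockDiagonal_apply]
  by_cases hri : r = i
  · subst hri
    simp only [if_pos rfl, if_true, mul_one]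
    refine Finset.sum_congr rfl fun y _ => ?_
    calc (∑ s : I, (if r = s then M r x y else 0) * (v y * if s = r then 1 else 0))
        = (if r = r then M r x y else 0) * (v y * if r = r then 1 else 0) :=
          Fintype.sum_eq_single r (fun s hs => by simp [hs, Ne.symm hs])
      _ = M r x y * v y := by simp
  · simp only [if_neg hri, mul_zero]
    rw [Finset.sum_comm]
    refine Finset.sum_eq_zero fun s _ => Finset.sum_eq_zero fun y _ => ?_
    by_cases hsi : s = i
    · subst hsi
      simp [Ne.symm hri, hri]
    · simp [hsi]

lemma isDiag_sum_smul_ind {γ I : Type} [Fintype γ] [Fintype I] [DecidableEq γ]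
    (q : I → ℂ) (e : I → γ) :
    (∑ i, q i • vecMulVec (ind (e i)) (star (ind (e i)))).IsDiag := by
  intro u v huv
  rw [Matrix.sum_apply]
  refine Finset.sum_eq_zero fun i _ => ?_
  by_cases hu : u = e i
  · have hv : v ≠ e i := fun h => huv (by rw [hu, h])
    simp [vecMulVec_apply, ind, hv]
  · simp [vecMulVec_apply, ind, hu]

lemma sum_prod_mul {f : n → ℂ} {g : m → ℂ} :
    ∑ u : n × m, f u.1 * g u.2 = (∑ x, f x) * (∑ y, g y) := by
  rw [Fintype.sum_prod_type, Finset.sum_mul]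
  exact Finset.sum_congr rfl fun x _ => by rw [Finset.mul_sum]

lemma exists_unitary_col {D : Type} [Fintype D] [DecidableEq D] (d₀ : D) (v : D → ℂ)
    (hv : ∑ x, star (v x) * v x = 1) :
    ∃ M : Matrix D D ℂ, M ∈ Matrix.unitaryGroup D ℂ ∧ ∀ d, M d d₀ = v d := by
  let v' : EuclideanSpace ℂ D := (EuclideanSpace.equiv D ℂ).symm v
  have hcard : Module.finrank ℂ (EuclideanSpace ℂ D) = Fintype.card D := finrank_euclideanSpace
  have horth : Orthonormal ℂ (({d₀} : Set D).restrict (fun _ => v')) := by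
    rw [orthonormal_iff_ite]
    intro i j
    have : i = j := Subsingleton.elim i j
    subst this
    simp only [Set.restrict_apply, if_pos rfl]
    rw [PiLp.inner_apply]
    refine (Finset.sum_congr rfl fun x _ => ?_).trans hv
    simp [v', mul_comm, Complex.mul_conj, Complex.normSq_eq_norm_sq]
    rfl
  obtain ⟨bb, hbb⟩ := horth.exists_orthonormalBasis_extension_of_card_eq hcard
  refine ⟨Matrix.of fun d d' => bb d' d, ?_, ?_⟩
  · rw [Matrix.mem_unitaryGroup_iff']
    ext i j
    have h2 := (orthonormal_iff_ite (𝕜 := ℂ)).mp bb.orthonormal i j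
    simp only [PiLp.inner_apply, RCLike.inner_apply] at h2
    simp only [Matrix.mul_apply, Matrix.one_apply, Matrix.of_apply,
      Matrix.conjTranspose_apply, star_apply]
    simpa [mul_comm] using h2
  · intro d
    have := hbb d₀ (Set.mem_singleton d₀)
    simp only [Matrix.of_apply]
    rw [this]; rfl

end helpers

/-- The `l₁`-coherence of a matrix with respect to the standard basis:
the sum of the absolute values of all off-diagonal entries. -/
noncomputable def coh {ι : Type} [Fintype ι] [DecidableEq ι] (M : Matrix ι ι ℂ) : ℝ :=
  ∑ i, ∑ j, if i ≠ j then ‖M i j‖ else 0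

lemma coh_eq_zero_of_isDiag {ι : Type} [Fintype ι] [DecidableEq ι] {M : Matrix ι ι ℂ}
    (h : M.IsDiag) : coh M = 0 := by
  unfold coh
  refine Finset.sum_eq_zero fun i _ => Finset.sum_eq_zero fun j _ => ?_
  by_cases hij : i = j
  · simp [hij]
  · rw [if_pos hij, h hij, norm_zero]

/-- Every separable bipartite state admits a unitarily symmetric extension
with zero correlated coherence with respect to the local eigenbases of the
extension's reduced states. -/
theorem stmt_7 {D : Type} [Fintype D] [DecidableEq D]
    (ρ : Matrix (D × D) (D × D) ℂ) (hρ : ρ.PosSemidef) (htr : ρ.trace = 1)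
    (I : Type) [Fintype I] (p : I → ℝ) (α β : I → D → ℂ)
    (hp : ∀ i, 0 ≤ p i) (hpsum : (∑ i, p i) = 1)
    (hα : ∀ i, ∑ x, star (α i x) * α i x = 1)
    (hβ : ∀ i, ∑ x, star (β i x) * β i x = 1)
    (hsep : ρ = ∑ i, (p i : ℂ) •
      ((Matrix.of fun x y : D => α i x * star (α i y)) ⊗ₖ
        (Matrix.of fun x y : D => β i x * star (β i y)))) :
    ∃ (R : Type) (_ : Fintype R) (_ : DecidableEq R)
      (τ : Matrix ((D × R) × (D × R)) ((D × R) × (D × R)) ℂ),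
      τ.PosSemidef ∧ τ.trace = 1 ∧
      -- (1) τ is an extension of ρ
      (∀ a b c d : D,
        (∑ r : R, ∑ s : R, τ ((a, r), (b, s)) ((c, r), (d, s))) = ρ (a, b) (c, d)) ∧
      -- (2) τ is unitarily symmetric
      (∃ U V : Matrix (D × R) (D × R) ℂ,
        U ∈ Matrix.unitaryGroup (D × R) ℂ ∧ V ∈ Matrix.unitaryGroup (D × R) ℂ ∧
        (U ⊗ₖ V) *
          (Matrix.of fun u v : (D × R) × (D × R) => τ (u.2, u.1) (v.2, v.1)) *
          (U ⊗ₖ V)ᴴ = τ) ∧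
      -- (3) τ has zero correlated coherence with respect to local eigenbases
      (∃ W₁ W₂ : Matrix (D × R) (D × R) ℂ,
        W₁ ∈ Matrix.unitaryGroup (D × R) ℂ ∧ W₂ ∈ Matrix.unitaryGroup (D × R) ℂ ∧
        (W₁ᴴ * (Matrix.of fun x x' : D × R => ∑ y : D × R, τ (x, y) (x', y)) * W₁).IsDiag ∧
        (W₂ᴴ * (Matrix.of fun y y' : D × R => ∑ x : D × R, τ (x, y) (x, y')) * W₂).IsDiag ∧
        coh ((W₁ ⊗ₖ W₂)ᴴ * τ * (W₁ ⊗ₖ W₂)) = 0) := by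
  classical
  have hI : Nonempty I := by
    by_contra h
    rw [not_nonempty_iff] at h
    rw [Finset.univ_eq_empty, Finset.sum_empty] at hpsum
    norm_num at hpsum
  obtain ⟨i₀⟩ := hI
  have hD : Nonempty D := by
    by_contra h
    rw [not_nonempty_iff] at h
    have h1 := hα i₀
    rw [Finset.univ_eq_empty, Finset.sum_empty] at h1
    norm_num at h1
  obtain ⟨d₀⟩ := hD
  choose A hAu hAc using fun i => exists_unitary_col d₀ (α i) (hα i)
  choose B hBu hBc using fun i => exists_unitary_col d₀ (β i) (hβ i)
  set a : I → D × I → ℂ := fun i u => α i u.1 * (if u.2 = i then 1 else 0) with ha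
  set b : I → D × I → ℂ := fun i u => β i u.1 * (if u.2 = i then 1 else 0) with hb
  set w : I → (D × I) × (D × I) → ℂ := fun i u => a i u.1 * b i u.2 with hw
  set τ : Matrix ((D × I) × (D × I)) ((D × I) × (D × I)) ℂ :=
    ∑ i, (p i : ℂ) • vecMulVec (w i) (star (w i)) with hτ
  have hτe : ∀ u v, τ u v = ∑ i, (p i : ℂ) * (w i u * star (w i v)) := by
    intro u v
    rw [hτ]
    simp [Matrix.sum_apply, Matrix.smul_apply, vecMulVec_apply, smul_eq_mul]
  have hasum : ∀ i, ∑ u : D × I, a i u * star (a i u) = 1 := by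
    intro i
    rw [ha, Fintype.sum_prod_type]
    have h1 : ∀ x : D, (∑ r : I, (α i x * (if r = i then (1:ℂ) else 0)) *
        star (α i x * (if r = i then (1:ℂ) else 0))) = α i x * star (α i x) := by
      intro x
      calc (∑ r : I, (α i x * (if r = i then (1:ℂ) else 0)) *
            star (α i x * (if r = i then (1:ℂ) else 0)))
          = (α i x * (if i = i then (1:ℂ) else 0)) *
            star (α i x * (if i = i then (1:ℂ) else 0)) :=
            Fintype.sum_eq_single i (fun r hr => by simp [hr])
        _ = α i x * star (α i x) := by simp
    rw [Finset.sum_congr rfl fun x _ => h1 x]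
    rw [Finset.sum_congr rfl fun x (_ : x ∈ Finset.univ) => mul_comm (α i x) (star (α i x))]
    exact hα i
  have hbsum : ∀ i, ∑ u : D × I, b i u * star (b i u) = 1 := by
    intro i
    rw [hb, Fintype.sum_prod_type]
    have h1 : ∀ x : D, (∑ r : I, (β i x * (if r = i then (1:ℂ) else 0)) *
        star (β i x * (if r = i then (1:ℂ) else 0))) = β i x * star (β i x) := by
      intro x
      calc (∑ r : I, (β i x * (if r = i then (1:ℂ) else 0)) *
            star (β i x * (if r = i then (1:ℂ) else 0)))
          = (β i x * (if i = i then (1:ℂ) else 0)) *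
            star (β i x * (if i = i then (1:ℂ) else 0)) :=
            Fintype.sum_eq_single i (fun r hr => by simp [hr])
        _ = β i x * star (β i x) := by simp
    rw [Finset.sum_congr rfl fun x _ => h1 x]
    rw [Finset.sum_congr rfl fun x (_ : x ∈ Finset.univ) => mul_comm (β i x) (star (β i x))]
    exact hβ i
  -- positive semidefinite
  have hPSD : τ.PosSemidef := by
    rw [hτ]
    refine posSemidef_sum' _ fun i => ?_
    rw [smul_vecMulVec_star (p i) (hp i)]
    exact posSemidef_vecMulVec_star _
  -- trace
  have htrτ : τ.trace = 1 := by
    rw [hτ, Matrix.trace_sum]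
    have h1 : ∀ i : I, ((p i : ℂ) • vecMulVec (w i) (star (w i))).trace = (p i : ℂ) := by
      intro i
      rw [Matrix.trace_smul]
      have h2 : (vecMulVec (w i) (star (w i))).trace = 1 := by
        rw [Matrix.trace]
        have h3 : ∀ u : (D × I) × (D × I), (vecMulVec (w i) (star (w i))).diag u =
            (a i u.1 * star (a i u.1)) * (b i u.2 * star (b i u.2)) := by
          intro u
          simp only [Matrix.diag_apply, vecMulVec_apply, Pi.star_apply, hw, star_mul']
          ring
        rw [Finset.sum_congr rfl fun u _ => h3 u]
        rw [sum_prod_mul (f := fun u => a i u * star (a i u)) (g := fun u => b i u * star (b i u))]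
        rw [hasum i, hbsum i, one_mul]
      rw [h2, smul_eq_mul, mul_one]
    rw [Finset.sum_congr rfl fun i _ => h1 i]
    rw [← Complex.ofReal_sum, hpsum, Complex.ofReal_one]
  -- extension
  have hcol : ∀ H : I → ℂ, (∑ r : I, ∑ i : I, H i * (if r = i then (1:ℂ) else 0)) = ∑ i, H i := by
    intro H
    rw [Finset.sum_comm]
    refine Finset.sum_congr rfl fun i _ => ?_
    calc (∑ r : I, H i * (if r = i then (1:ℂ) else 0))
        = H i * (if i = i then (1:ℂ) else 0) :=
          Fintype.sum_eq_single i (fun r hr => by simp [hr])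
      _ = H i := by simp
  have hext : ∀ a' b' c' d' : D,
      (∑ r : I, ∑ s : I, τ ((a', r), (b', s)) ((c', r), (d', s))) = ρ (a', b') (c', d') := by
    intro a' b' c' d'
    have h1 : ∀ r s : I, τ ((a', r), (b', s)) ((c', r), (d', s)) =
        ∑ i, ((p i : ℂ) * ((α i a' * star (α i c')) * (β i b' * star (β i d'))) *
          (if r = i then (1:ℂ) else 0)) * (if s = i then (1:ℂ) else 0) := by
      intro r s
      rw [hτe]
      refine Finset.sum_congr rfl fun i _ => ?_
      have hww : (w i ((a', r), (b', s)) * star (w i ((c', r), (d', s)))) =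
          ((α i a' * star (α i c')) * (β i b' * star (β i d'))) *
            ((if r = i then (1:ℂ) else 0) * (if s = i then (1:ℂ) else 0)) := by
        simp only [hw, ha, hb, star_mul']
        by_cases hr : r = i <;> by_cases hs : s = i <;> simp [hr, hs] <;> ring
      rw [hww]
      ring
    rw [Finset.sum_congr rfl fun r _ => Finset.sum_congr rfl fun s _ => h1 r s]
    have h2 : ∀ r : I, (∑ s : I, ∑ i : I,
        ((p i : ℂ) * ((α i a' * star (α i c')) * (β i b' * star (β i d'))) *
          (if r = i then (1:ℂ) else 0)) * (if s = i then (1:ℂ) else 0)) =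
        ∑ i : I, (p i : ℂ) * ((α i a' * star (α i c')) * (β i b' * star (β i d'))) *
          (if r = i then (1:ℂ) else 0) :=
      fun r => hcol _
    rw [Finset.sum_congr rfl fun r _ => h2 r, hcol]
    rw [hsep]
    simp only [Matrix.sum_apply, Matrix.smul_apply, Matrix.kroneckerMap_apply, Matrix.of_apply,
      smul_eq_mul]
    try exact Finset.sum_congr rfl fun i _ => by ring
  -- column facts
  have hAt : ∀ i, (A i)ᴴ *ᵥ α i = fun d => if d = d₀ then (1:ℂ) else 0 := by
    intro i
    funext d
    have h1 : (A i)ᴴ * A i = 1 := by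
      have h2 := Matrix.mem_unitaryGroup_iff'.mp (hAu i)
      rwa [Matrix.star_eq_conjTranspose] at h2
    calc ((A i)ᴴ *ᵥ α i) d = ∑ x, (A i)ᴴ d x * α i x := rfl
      _ = ∑ x, (A i)ᴴ d x * A i x d₀ := Finset.sum_congr rfl fun x _ => by rw [hAc i x]
      _ = ((A i)ᴴ * A i) d d₀ := (Matrix.mul_apply).symm
      _ = if d = d₀ then 1 else 0 := by rw [h1, Matrix.one_apply]
  have hBt : ∀ i, (B i)ᴴ *ᵥ β i = fun d => if d = d₀ then (1:ℂ) else 0 := by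
    intro i
    funext d
    have h1 : (B i)ᴴ * B i = 1 := by
      have h2 := Matrix.mem_unitaryGroup_iff'.mp (hBu i)
      rwa [Matrix.star_eq_conjTranspose] at h2
    calc ((B i)ᴴ *ᵥ β i) d = ∑ x, (B i)ᴴ d x * β i x := rfl
      _ = ∑ x, (B i)ᴴ d x * B i x d₀ := Finset.sum_congr rfl fun x _ => by rw [hBc i x]
      _ = ((B i)ᴴ * B i) d d₀ := (Matrix.mul_apply).symm
      _ = if d = d₀ then 1 else 0 := by rw [h1, Matrix.one_apply]
  have hAe : ∀ i, A i *ᵥ (fun d => if d = d₀ then (1:ℂ) else 0) = α i := by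
    intro i
    funext x
    calc (A i *ᵥ fun d => if d = d₀ then (1:ℂ) else 0) x
        = ∑ d, A i x d * (if d = d₀ then (1:ℂ) else 0) := rfl
      _ = A i x d₀ * (if d₀ = d₀ then (1:ℂ) else 0) :=
          Fintype.sum_eq_single d₀ (fun d hd => by simp [hd])
      _ = α i x := by rw [hAc i x]; simp
  have hBe : ∀ i, B i *ᵥ (fun d => if d = d₀ then (1:ℂ) else 0) = β i := by
    intro i
    funext x
    calc (B i *ᵥ fun d => if d = d₀ then (1:ℂ) else 0) x
        = ∑ d, B i x d * (if d = d₀ then (1:ℂ) else 0) := rfl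
      _ = B i x d₀ * (if d₀ = d₀ then (1:ℂ) else 0) :=
          Fintype.sum_eq_single d₀ (fun d hd => by simp [hd])
      _ = β i x := by rw [hBc i x]; simp
  -- symmetry unitaries
  have hBHu : ∀ i, (B i)ᴴ ∈ Matrix.unitaryGroup D ℂ := by
    intro i
    rw [← Matrix.star_eq_conjTranspose]
    exact Unitary.star_mem (hBu i)
  have hAHu : ∀ i, (A i)ᴴ ∈ Matrix.unitaryGroup D ℂ := by
    intro i
    rw [← Matrix.star_eq_conjTranspose]
    exact Unitary.star_mem (hAu i)
  have hUmem : Matrix.blockDiagonal (fun i => A i * (B i)ᴴ) ∈ Matrix.unitaryGroup (D × I) ℂ :=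
    blockDiagonal_mem_unitaryGroup _ fun i => mul_mem (hAu i) (hBHu i)
  have hVmem : Matrix.blockDiagonal (fun i => B i * (A i)ᴴ) ∈ Matrix.unitaryGroup (D × I) ℂ :=
    blockDiagonal_mem_unitaryGroup _ fun i => mul_mem (hBu i) (hAHu i)
  have hUb : ∀ i, Matrix.blockDiagonal (fun j => A j * (B j)ᴴ) *ᵥ b i = a i := by
    intro i
    rw [hb, ha, blockDiagonal_mulVec_single (fun j => A j * (B j)ᴴ) i (β i)]
    have h1 : (A i * (B i)ᴴ) *ᵥ β i = α i := by
      rw [← Matrix.mulVec_mulVec, hBt i, hAe i]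
    rw [h1]
  have hVa : ∀ i, Matrix.blockDiagonal (fun j => B j * (A j)ᴴ) *ᵥ a i = b i := by
    intro i
    rw [hb, ha, blockDiagonal_mulVec_single (fun j => B j * (A j)ᴴ) i (α i)]
    have h1 : (B i * (A i)ᴴ) *ᵥ α i = β i := by
      rw [← Matrix.mulVec_mulVec, hAt i, hBe i]
    rw [h1]
  -- eigenbasis facts
  have hW1key : ∀ i, (Matrix.blockDiagonal A)ᴴ *ᵥ a i = ind ((d₀, i) : D × I) := by
    intro i
    rw [Matrix.blockDiagonal_conjTranspose, ha,
      blockDiagonal_mulVec_single (fun j => (A j)ᴴ) i (α i), hAt i, ← ind_mul_ind d₀ i]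
    rfl
  have hW2key : ∀ i, (Matrix.blockDiagonal B)ᴴ *ᵥ b i = ind ((d₀, i) : D × I) := by
    intro i
    rw [Matrix.blockDiagonal_conjTranspose, hb,
      blockDiagonal_mulVec_single (fun j => (B j)ᴴ) i (β i), hBt i, ← ind_mul_ind d₀ i]
    rfl
  refine ⟨I, inferInstance, inferInstance, τ, hPSD, htrτ, hext, ?_, ?_⟩
  · -- symmetry
    refine ⟨Matrix.blockDiagonal (fun i => A i * (B i)ᴴ),
      Matrix.blockDiagonal (fun i => B i * (A i)ᴴ), hUmem, hVmem, ?_⟩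
    have hswapτ : (Matrix.of fun u v : (D × I) × (D × I) => τ (u.2, u.1) (v.2, v.1)) =
        ∑ i, (p i : ℂ) • vecMulVec (fun u : (D × I) × (D × I) => b i u.1 * a i u.2)
          (star fun u : (D × I) × (D × I) => b i u.1 * a i u.2) := by
      ext u v
      rw [Matrix.of_apply, hτe]
      simp only [Matrix.sum_apply, Matrix.smul_apply, vecMulVec_apply, smul_eq_mul,
        Pi.star_apply]
      refine Finset.sum_congr rfl fun i _ => ?_
      simp only [hw, star_mul']
      ring
    rw [hswapτ, Matrix.mul_sum, Matrix.sum_mul, hτ]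
    refine Finset.sum_congr rfl fun i _ => ?_
    rw [Matrix.mul_smul, Matrix.smul_mul, conj_vecMulVec]
    have h2 : (Matrix.blockDiagonal (fun i => A i * (B i)ᴴ) ⊗ₖ
        Matrix.blockDiagonal (fun i => B i * (A i)ᴴ)) *ᵥ
        (fun u : (D × I) × (D × I) => b i u.1 * a i u.2) = w i := by
      rw [kron_mulVec, hUb i, hVa i]
    rw [h2]
  · -- coherence
    refine ⟨Matrix.blockDiagonal A, Matrix.blockDiagonal B,
      blockDiagonal_mem_unitaryGroup A hAu, blockDiagonal_mem_unitaryGroup B hBu, ?_, ?_, ?_⟩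
    · -- first reduced matrix diagonal
      have hared : (Matrix.of fun x x' : D × I => ∑ y : D × I, τ (x, y) (x', y)) =
          ∑ i, (p i : ℂ) • vecMulVec (a i) (star (a i)) := by
        ext x x'
        rw [Matrix.of_apply]
        calc (∑ y : D × I, τ (x, y) (x', y))
            = ∑ y : D × I, ∑ i, (p i : ℂ) *
              ((a i x * star (a i x')) * (b i y * star (b i y))) := by
              refine Finset.sum_congr rfl fun y _ => ?_
              rw [hτe]
              refine Finset.sum_congr rfl fun i _ => ?_
              simp only [hw, star_mul']
              ring
          _ = ∑ i, ∑ y : D × I, (p i : ℂ) *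
              ((a i x * star (a i x')) * (b i y * star (b i y))) := Finset.sum_comm
          _ = ∑ i, (p i : ℂ) * (a i x * star (a i x')) := by
              refine Finset.sum_congr rfl fun i _ => ?_
              rw [← Finset.mul_sum, ← Finset.mul_sum, hbsum i, mul_one]
          _ = (∑ i, (p i : ℂ) • vecMulVec (a i) (star (a i))) x x' := by
              simp [Matrix.sum_apply, Matrix.smul_apply, vecMulVec_apply, smul_eq_mul]
      rw [hared, Matrix.mul_sum, Matrix.sum_mul]
      have hform : ∀ i, (Matrix.blockDiagonal A)ᴴ * ((p i : ℂ) • vecMulVec (a i) (star (a i))) *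
          Matrix.blockDiagonal A =
          (p i : ℂ) • vecMulVec (ind ((d₀, i) : D × I)) (star (ind ((d₀, i) : D × I))) := by
        intro i
        rw [Matrix.mul_smul, Matrix.smul_mul]
        congr 1
        have h3 := conj_vecMulVec ((Matrix.blockDiagonal A)ᴴ) (a i)
        rw [Matrix.conjTranspose_conjTranspose] at h3
        rw [h3, hW1key i]
      rw [Finset.sum_congr rfl fun i _ => hform i]
      exact isDiag_sum_smul_ind _ _
    · -- second reduced matrix diagonal
      have hbred : (Matrix.of fun y y' : D × I => ∑ x : D × I, τ (x, y) (x, y')) =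
          ∑ i, (p i : ℂ) • vecMulVec (b i) (star (b i)) := by
        ext y y'
        rw [Matrix.of_apply]
        calc (∑ x : D × I, τ (x, y) (x, y'))
            = ∑ x : D × I, ∑ i, (p i : ℂ) *
              ((b i y * star (b i y')) * (a i x * star (a i x))) := by
              refine Finset.sum_congr rfl fun x _ => ?_
              rw [hτe]
              refine Finset.sum_congr rfl fun i _ => ?_
              simp only [hw, star_mul']
              ring
          _ = ∑ i, ∑ x : D × I, (p i : ℂ) *
              ((b i y * star (b i y')) * (a i x * star (a i x))) := Finset.sum_comm
          _ = ∑ i, (p i : ℂ) * (b i y * star (b i y')) := by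
              refine Finset.sum_congr rfl fun i _ => ?_
              rw [← Finset.mul_sum, ← Finset.mul_sum, hasum i, mul_one]
          _ = (∑ i, (p i : ℂ) • vecMulVec (b i) (star (b i))) y y' := by
              simp [Matrix.sum_apply, Matrix.smul_apply, vecMulVec_apply, smul_eq_mul]
      rw [hbred, Matrix.mul_sum, Matrix.sum_mul]
      have hform : ∀ i, (Matrix.blockDiagonal B)ᴴ * ((p i : ℂ) • vecMulVec (b i) (star (b i))) *
          Matrix.blockDiagonal B =
          (p i : ℂ) • vecMulVec (ind ((d₀, i) : D × I)) (star (ind ((d₀, i) : D × I))) := by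
        intro i
        rw [Matrix.mul_smul, Matrix.smul_mul]
        congr 1
        have h3 := conj_vecMulVec ((Matrix.blockDiagonal B)ᴴ) (b i)
        rw [Matrix.conjTranspose_conjTranspose] at h3
        rw [h3, hW2key i]
      rw [Finset.sum_congr rfl fun i _ => hform i]
      exact isDiag_sum_smul_ind _ _
    · -- zero coherence
      have hconj : (Matrix.blockDiagonal A ⊗ₖ Matrix.blockDiagonal B)ᴴ * τ *
          (Matrix.blockDiagonal A ⊗ₖ Matrix.blockDiagonal B) =
          ∑ i, (p i : ℂ) • vecMulVec (ind (((d₀, i), (d₀, i)) : (D × I) × (D × I)))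
            (star (ind (((d₀, i), (d₀, i)) : (D × I) × (D × I)))) := by
        rw [hτ, Matrix.mul_sum, Matrix.sum_mul]
        refine Finset.sum_congr rfl fun i _ => ?_
        rw [Matrix.mul_smul, Matrix.smul_mul]
        congr 1
        have h3 := conj_vecMulVec ((Matrix.blockDiagonal A ⊗ₖ Matrix.blockDiagonal B)ᴴ) (w i)
        rw [Matrix.conjTranspose_conjTranspose] at h3
        rw [h3]
        have h4 : (Matrix.blockDiagonal A ⊗ₖ Matrix.blockDiagonal B)ᴴ *ᵥ w i =
            ind (((d₀, i), (d₀, i)) : (D × I) × (D × I)) := by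
          rw [kron_conjTranspose, hw]
          rw [kron_mulVec ((Matrix.blockDiagonal A)ᴴ) ((Matrix.blockDiagonal B)ᴴ) (a i) (b i)]
          rw [hW1key i, hW2key i]
          exact ind_mul_ind _ _
        rw [h4]
      rw [hconj]
      exact coh_eq_zero_of_isDiag (isDiag_sum_smul_ind _ _)
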